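/- Let k be a field with char(k) ≠ 2. The algebra k⟨T,S⟩/(T² − 1, S² − 1) (the group algebra of the infinite dihedral group's free product structure, i.e., free product of two copies of Z/2 over k) admits infinitely many pairwise non-isomorphic finite-dimensional indecomposable modules. -/

import Mathlib

/-- The defining relations `T² = 1` and `S² = 1` on the free algebra `k⟨T,S⟩`
(generator `true` is `T`, generator `false` is `S`). -/
inductive DihedralRel (k : Type*) [Field k] : FreeAlgebra k Bool → FreeAlgebra k Bool → Prop
  | T : DihedralRel k (FreeAlgebra.ι k true * FreeAlgebra.ι k true) 1
  | S : DihedralRel k (FreeAlgebra.ι k false * FreeAlgebra.ι k false) 1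

/-- A module is indecomposable: it is nonzero and not a direct sum of two nonzero
submodules. -/
def IsIndecomposableModule (A M : Type*) [Ring A] [AddCommGroup M] [Module A M] : Prop :=
  (⊤ : Submodule A M) ≠ ⊥ ∧
    ∀ N P : Submodule A M, IsCompl N P → N = ⊥ ∨ P = ⊥

namespace DihedralProof

open Polynomial

noncomputable section

variable (k : Type) [Field k] (n : ℕ)

/-- The polynomial `(X - 1)^(n+1)`. -/
def dhPoly : k[X] := (X - C 1) ^ (n + 1)

/-- The module `k[X]/((X-1)^(n+1))`. -/
abbrev DhB := AdjoinRoot (dhPoly k n)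

lemma dhPoly_ne_zero : dhPoly k n ≠ 0 :=
  pow_ne_zero _ (X_sub_C_ne_zero 1)

lemma dhPoly_natDegree : (dhPoly k n).natDegree = n + 1 := by
  rw [dhPoly, natDegree_pow, natDegree_X_sub_C, mul_one]

lemma dh_root_sub_one_pow : (AdjoinRoot.root (dhPoly k n) - 1) ^ (n + 1) = 0 := by
  have h : AdjoinRoot.mk (dhPoly k n) ((X - C 1) ^ (n + 1)) = 0 := AdjoinRoot.mk_self
  rw [map_pow, map_sub, AdjoinRoot.mk_X, AdjoinRoot.mk_C, map_one] at h
  exact h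

lemma dh_isUnit_root : IsUnit (AdjoinRoot.root (dhPoly k n)) := by
  have h : IsNilpotent (AdjoinRoot.root (dhPoly k n) - 1) :=
    ⟨n + 1, dh_root_sub_one_pow k n⟩
  have h2 : AdjoinRoot.root (dhPoly k n) = 1 + (AdjoinRoot.root (dhPoly k n) - 1) := by ring
  rw [h2]
  exact h.isUnit_one_add

/-- The root `x` as a unit. -/
def dhU : (DhB k n)ˣ := (dh_isUnit_root k n).unit

lemma dhU_val : (dhU k n : DhB k n) = AdjoinRoot.root (dhPoly k n) :=
  (dh_isUnit_root k n).unit_spec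

lemma dh_aeval_inv : aeval (((dhU k n)⁻¹ : (DhB k n)ˣ) : DhB k n) (dhPoly k n) = (0 : DhB k n) := by
  have h1 : (((dhU k n)⁻¹ : (DhB k n)ˣ) : DhB k n) - (1 : DhB k n) =
      (((dhU k n)⁻¹ : (DhB k n)ˣ) : DhB k n) * (1 - AdjoinRoot.root (dhPoly k n)) := by
    rw [mul_sub, mul_one, ← dhU_val, Units.inv_mul]
  have h2 : ((1 : DhB k n) - AdjoinRoot.root (dhPoly k n)) ^ (n + 1) = 0 := by
    rw [← neg_sub, neg_pow, dh_root_sub_one_pow, mul_zero]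
  simp only [dhPoly, map_pow, map_sub, aeval_X, map_one]
  rw [h1, mul_pow, h2, mul_zero]

/-- The involution `x ↦ x⁻¹` of `k[X]/((X-1)^(n+1))`. -/
def dhTau : DhB k n →ₐ[k] DhB k n :=
  AdjoinRoot.liftAlgHom (dhPoly k n) (Algebra.ofId k (DhB k n)) (((dhU k n)⁻¹ : (DhB k n)ˣ) : DhB k n) (dh_aeval_inv k n)

lemma dhTau_root :
    dhTau k n (AdjoinRoot.root (dhPoly k n)) = (((dhU k n)⁻¹ : (DhB k n)ˣ) : DhB k n) := by
  exact AdjoinRoot.liftAlgHom_root (h := dh_aeval_inv k n) ..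

lemma dhTau_inv :
    dhTau k n (((dhU k n)⁻¹ : (DhB k n)ˣ) : DhB k n) = AdjoinRoot.root (dhPoly k n) := by
  have h : dhTau k n (AdjoinRoot.root (dhPoly k n)) *
      dhTau k n (((dhU k n)⁻¹ : (DhB k n)ˣ) : DhB k n) = 1 := by
    rw [← map_mul, ← dhU_val, Units.mul_inv, map_one]
  rw [dhTau_root] at h
  rw [← one_mul (dhTau k n (((dhU k n)⁻¹ : (DhB k n)ˣ) : DhB k n)),
    ← Units.mul_inv (dhU k n), mul_assoc, h, mul_one, dhU_val]

lemma dhTau_tau (v : DhB k n) : dhTau k n (dhTau k n v) = v := by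
  have h : (dhTau k n).comp (dhTau k n) = AlgHom.id k (DhB k n) := by
    apply AdjoinRoot.algHom_ext
    simp [AlgHom.comp_apply, dhTau_root, dhTau_inv]
  calc dhTau k n (dhTau k n v) = ((dhTau k n).comp (dhTau k n)) v := rfl
    _ = v := by rw [h]; rfl

/-- The action of `T`. -/
def dhT : Module.End k (DhB k n) := (dhTau k n).toLinearMap

/-- The action of `S`: `v ↦ τ(x·v)`. -/
def dhS : Module.End k (DhB k n) :=
  (dhTau k n).toLinearMap ∘ₗ LinearMap.mulLeft k (AdjoinRoot.root (dhPoly k n))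

lemma dhT_apply (v : DhB k n) : dhT k n v = dhTau k n v := rfl

lemma dhS_apply (v : DhB k n) :
    dhS k n v = dhTau k n (AdjoinRoot.root (dhPoly k n) * v) := rfl

lemma dhT_sq : dhT k n * dhT k n = 1 := by
  ext v
  simp [Module.End.mul_apply, dhT_apply, dhTau_tau, Module.End.one_apply]

lemma dhS_sq : dhS k n * dhS k n = 1 := by
  ext v
  simp only [Module.End.mul_apply, dhS_apply, Module.End.one_apply]
  rw [map_mul (dhTau k n), dhTau_tau, dhTau_root, ← dhU_val, ← mul_assoc,
    Units.inv_mul, one_mul]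

/-- The representation of the free algebra. -/
def dhRho : FreeAlgebra k Bool →ₐ[k] Module.End k (DhB k n) :=
  FreeAlgebra.lift k (fun b => if b then dhT k n else dhS k n)

lemma dhRho_rel : ∀ ⦃x y : FreeAlgebra k Bool⦄, DihedralRel k x y → dhRho k n x = dhRho k n y := by
  intro x y h
  cases h with
  | T => simp [dhRho, map_mul, FreeAlgebra.lift_ι_apply, dhT_sq, map_one]
  | S => simp [dhRho, map_mul, FreeAlgebra.lift_ι_apply, dhS_sq, map_one]

/-- The representation of the quotient algebra. -/
def dhPhi : RingQuot (DihedralRel k) →ₐ[k] Module.End k (DhB k n) :=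
  RingQuot.liftAlgHom k ⟨dhRho k n, dhRho_rel k n⟩

instance dhModule : Module (RingQuot (DihedralRel k)) (DhB k n) :=
  Module.compHom _ (dhPhi k n).toRingHom

lemma dh_smul_def (r : RingQuot (DihedralRel k)) (v : DhB k n) :
    r • v = dhPhi k n r v := rfl

lemma dh_algebraMap_smul (c : k) (v : DhB k n) :
    (algebraMap k (RingQuot (DihedralRel k)) c) • v = c • v := by
  rw [dh_smul_def, AlgHom.commutes, Module.algebraMap_end_apply]

lemma dh_ts_smul (v : DhB k n) :
    ((RingQuot.mkAlgHom k (DihedralRel k) (FreeAlgebra.ι k true)) *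
      (RingQuot.mkAlgHom k (DihedralRel k) (FreeAlgebra.ι k false))) • v =
      AdjoinRoot.root (dhPoly k n) * v := by
  rw [dh_smul_def, map_mul]
  show dhPhi k n (RingQuot.mkAlgHom k (DihedralRel k) (FreeAlgebra.ι k true))
      (dhPhi k n (RingQuot.mkAlgHom k (DihedralRel k) (FreeAlgebra.ι k false)) v) =
    AdjoinRoot.root (dhPoly k n) * v
  rw [dhPhi, RingQuot.liftAlgHom_mkAlgHom_apply, RingQuot.liftAlgHom_mkAlgHom_apply]
  show dhRho k n (FreeAlgebra.ι k true) (dhRho k n (FreeAlgebra.ι k false) v) = _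
  rw [dhRho, FreeAlgebra.lift_ι_apply, FreeAlgebra.lift_ι_apply]
  simp only [if_true, if_neg Bool.false_ne_true]
  show dhT k n (dhS k n v) = _
  rw [dhS_apply, dhT_apply, dhTau_tau]

variable {k n} in
lemma dh_root_mul_mem (N : Submodule (RingQuot (DihedralRel k)) (DhB k n)) {v : DhB k n}
    (hv : v ∈ N) : AdjoinRoot.root (dhPoly k n) * v ∈ N := by
  have := N.smul_mem ((RingQuot.mkAlgHom k (DihedralRel k) (FreeAlgebra.ι k true)) *
    (RingQuot.mkAlgHom k (DihedralRel k) (FreeAlgebra.ι k false))) hv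
  rwa [dh_ts_smul] at this

variable {k n} in
lemma dh_k_smul_mem (N : Submodule (RingQuot (DihedralRel k)) (DhB k n)) {v : DhB k n}
    (hv : v ∈ N) (c : k) : c • v ∈ N := by
  have := N.smul_mem (algebraMap k (RingQuot (DihedralRel k)) c) hv
  rwa [dh_algebraMap_smul] at this

variable {k n} in
lemma dh_mul_mem (N : Submodule (RingQuot (DihedralRel k)) (DhB k n)) {v : DhB k n}
    (hv : v ∈ N) (b : DhB k n) : b * v ∈ N := by
  have hpow : ∀ i : ℕ, AdjoinRoot.root (dhPoly k n) ^ i * v ∈ N := by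
    intro i
    induction i with
    | zero => simpa using hv
    | succ i ih =>
      have := dh_root_mul_mem N ih
      rwa [← mul_assoc, ← pow_succ'] at this
  obtain ⟨p, rfl⟩ := AdjoinRoot.mk_surjective b
  induction p using Polynomial.induction_on' with
  | add p q hp hq =>
    rw [map_add, add_mul]
    exact N.add_mem hp hq
  | monomial i c =>
    rw [← C_mul_X_pow_eq_monomial, map_mul, map_pow, AdjoinRoot.mk_X, AdjoinRoot.mk_C,
      mul_assoc, ← AdjoinRoot.algebraMap_eq, ← Algebra.smul_def]
    exact dh_k_smul_mem N (hpow i) c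

/-- The ideal of `DhB` associated to a `RingQuot`-submodule. -/
def dhIdeal (N : Submodule (RingQuot (DihedralRel k)) (DhB k n)) : Ideal (DhB k n) where
  carrier := N
  add_mem' := fun ha hb => N.add_mem ha hb
  zero_mem' := N.zero_mem
  smul_mem' := fun c {x} hx => by
    simpa [smul_eq_mul] using dh_mul_mem N hx c

lemma dh_idem (a : DhB k n) (h : a * a = a) : a = 0 ∨ a = 1 := by
  obtain ⟨p, rfl⟩ := AdjoinRoot.mk_surjective a
  have hdvd : dhPoly k n ∣ (p - 1) * p := by
    rw [← AdjoinRoot.mk_eq_zero]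
    have heq : (p - 1) * p = p * p - p := by ring
    rw [heq, map_sub, map_mul, h, sub_self]
  have hprime : Prime (X - C (1 : k)) := prime_X_sub_C 1
  by_cases hp : (X - C (1 : k)) ∣ p
  · left
    have hnp : ¬ (X - C (1 : k)) ∣ (p - 1) := by
      intro h'
      have h1 : (X - C (1 : k)) ∣ 1 := by
        have := dvd_sub hp h'
        simpa using this
      exact hprime.not_dvd_one h1
    have hd : dhPoly k n ∣ p := hprime.pow_dvd_of_dvd_mul_left (n + 1) hnp hdvd
    exact AdjoinRoot.mk_eq_zero.2 hd
  · right
    have hd : dhPoly k n ∣ (p - 1) := hprime.pow_dvd_of_dvd_mul_right (n + 1) hp hdvd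
    have h0 : AdjoinRoot.mk (dhPoly k n) (p - 1) = 0 := AdjoinRoot.mk_eq_zero.2 hd
    rw [map_sub, map_one, sub_eq_zero] at h0
    exact h0

instance dh_nontrivial : Nontrivial (DhB k n) := by
  refine AdjoinRoot.nontrivial _ ?_
  rw [degree_eq_natDegree (dhPoly_ne_zero k n), dhPoly_natDegree]
  exact_mod_cast Nat.succ_ne_zero n

lemma dh_indecomposable :
    IsIndecomposableModule (RingQuot (DihedralRel k)) (DhB k n) := by
  constructor
  · intro h
    have h1 : (1 : DhB k n) ∈ (⊥ : Submodule (RingQuot (DihedralRel k)) (DhB k n)) := by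
      rw [← h]; trivial
    rw [Submodule.mem_bot] at h1
    exact one_ne_zero h1
  · intro N P hcompl
    have hsup : N ⊔ P = ⊤ := codisjoint_iff.1 hcompl.codisjoint
    have hinf : N ⊓ P = ⊥ := disjoint_iff.1 hcompl.disjoint
    have h1 : (1 : DhB k n) ∈ N ⊔ P := by rw [hsup]; trivial
    obtain ⟨a, ha, b, hb, hab⟩ := Submodule.mem_sup.1 h1
    have habN : a * b ∈ N := by rw [mul_comm]; exact dh_mul_mem N ha b
    have habP : a * b ∈ P := dh_mul_mem P hb a
    have hab0 : a * b = 0 := by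
      have : a * b ∈ N ⊓ P := ⟨habN, habP⟩
      rwa [hinf, Submodule.mem_bot] at this
    have hidem : a * a = a := by
      have : a * (a + b) = a * 1 := by rw [hab]
      rw [mul_add, hab0, add_zero, mul_one] at this
      exact this
    rcases dh_idem k n a hidem with h0 | h1'
    · left
      have hb1 : b = 1 := by rw [h0, zero_add] at hab; exact hab
      have hP : P = ⊤ := by
        rw [Submodule.eq_top_iff']
        intro v
        have := dh_mul_mem P hb v
        rwa [hb1, mul_one] at this
      calc N = N ⊓ P := by rw [hP]; exact (inf_top_eq N).symm
        _ = ⊥ := hinf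
    · right
      have h1N : (1 : DhB k n) ∈ N := h1' ▸ ha
      have hN : N = ⊤ := by
        rw [Submodule.eq_top_iff']
        intro v
        have := dh_mul_mem N h1N v
        rwa [mul_one] at this
      calc P = N ⊓ P := by rw [hN]; exact (top_inf_eq P).symm
        _ = ⊥ := hinf

instance dh_finiteDimensional : FiniteDimensional k (DhB k n) :=
  Module.Finite.of_basis (AdjoinRoot.powerBasis (dhPoly_ne_zero k n)).basis

lemma dh_finrank : Module.finrank k (DhB k n) = n + 1 := by
  rw [(AdjoinRoot.powerBasis (dhPoly_ne_zero k n)).finrank]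
  exact dhPoly_natDegree k n

universe u

/-- Indecomposability transfers along linear equivalences. -/
lemma indec_transfer {A : Type*} [Ring A] {M M₂ : Type*} [AddCommGroup M] [AddCommGroup M₂]
    [Module A M] [Module A M₂] (e : M ≃ₗ[A] M₂) (h : IsIndecomposableModule A M) :
    IsIndecomposableModule A M₂ := by
  obtain ⟨h1, h2⟩ := h
  constructor
  · intro hbot
    apply h1
    ext v
    simp only [Submodule.mem_top, Submodule.mem_bot, true_iff]
    have hv : e v ∈ (⊤ : Submodule A M₂) := Submodule.mem_top
    rw [hbot, Submodule.mem_bot] at hv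
    exact e.map_eq_zero_iff.1 hv
  · intro N P hNP
    let g : Submodule A M₂ ≃o Submodule A M := Submodule.orderIsoMapComap e.symm
    have hg : IsCompl (g N) (g P) := by
      constructor
      · rw [disjoint_iff, ← g.map_inf, disjoint_iff.1 hNP.disjoint, g.map_bot]
      · rw [codisjoint_iff, ← g.map_sup, codisjoint_iff.1 hNP.codisjoint, g.map_top]
    rcases h2 (g N) (g P) hg with h0 | h0
    · left
      have : g N = g ⊥ := by rw [h0, g.map_bot]
      exact g.injective this
    · right
      have : g P = g ⊥ := by rw [h0, g.map_bot]
      exact g.injective this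

lemma dh_up_smul (c : k) (v : DhB k n) :
    ULift.up.{u} (c • v) = (algebraMap k (RingQuot (DihedralRel k)) c) • ULift.up.{u} v := by
  rw [← dh_algebraMap_smul k n c v]
  rfl

/-- The chosen module in `ModuleCat` (`ULift`ed for universe polymorphism). -/
def dhM : ModuleCat.{u} (RingQuot (DihedralRel k)) :=
  ModuleCat.of (RingQuot (DihedralRel k)) (ULift.{u} (DhB k n))

/-- The restriction of scalars is `k`-linearly the original space. -/
def dhRestrictEquiv :
    RestrictScalars k (RingQuot (DihedralRel k)) (ULift.{u} (DhB k n)) ≃ₗ[k] DhB k n where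
  toFun := fun v =>
    ((RestrictScalars.addEquiv k (RingQuot (DihedralRel k)) (ULift.{u} (DhB k n))) v).down
  invFun := fun v =>
    (RestrictScalars.addEquiv k (RingQuot (DihedralRel k)) (ULift.{u} (DhB k n))).symm
      (ULift.up v)
  left_inv := fun v => rfl
  right_inv := fun v => rfl
  map_add' := fun a b => rfl
  map_smul' := fun c v => dh_algebraMap_smul k n c _

end

end DihedralProof

open DihedralProof in
theorem stmt_2 (k : Type) [Field k] (h2 : (2 : k) ≠ 0) :
    -- `k⟨T,S⟩/(T² − 1, S² − 1)` admits infinitely many pairwise non-isomorphic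
    -- finite-dimensional indecomposable modules
    ∃ M : ℕ → ModuleCat (RingQuot (DihedralRel k)),
      (∀ n, @FiniteDimensional k (RestrictScalars k (RingQuot (DihedralRel k)) (M n)) _ _
        (RestrictScalars.module k (RingQuot (DihedralRel k)) (M n))) ∧
      (∀ n, IsIndecomposableModule (RingQuot (DihedralRel k)) (M n)) ∧
      (∀ n m : ℕ, n ≠ m → IsEmpty ((M n) ≃ₗ[RingQuot (DihedralRel k)] (M m))) := by
  refine ⟨fun n => dhM k n, ?_, ?_, ?_⟩
  · intro n
    exact @LinearEquiv.finiteDimensional k (DhB k n) _ _ _ _ _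
      (RestrictScalars.module k (RingQuot (DihedralRel k)) (ULift.{u_1} (DhB k n)))
      (dhRestrictEquiv.{u_1} k n).symm _
  · intro n
    exact indec_transfer (ULift.moduleEquiv).symm (dh_indecomposable k n)
  · intro n m hnm
    constructor
    intro e
    change ULift (DhB k n) ≃ₗ[RingQuot (DihedralRel k)] ULift (DhB k m) at e
    apply hnm
    have e' : DhB k n ≃ₗ[k] DhB k m :=
      { toFun := fun v => (e (ULift.up v)).down
        invFun := fun w => (e.symm (ULift.up w)).down
        left_inv := fun v => by
          show (e.symm (e (ULift.up v))).down = v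
          rw [e.symm_apply_apply]
        right_inv := fun w => by
          show (e (e.symm (ULift.up w))).down = w
          rw [e.apply_symm_apply]
        map_add' := fun a b => by
          show (e (ULift.up a + ULift.up b)).down = _
          rw [map_add]
          rfl
        map_smul' := fun c v => by
          show (e (ULift.up (c • v))).down = c • (e (ULift.up v)).down
          rw [dh_up_smul, map_smul]
          exact dh_algebraMap_smul k m c (e (ULift.up v)).down }
    have h1 : Module.finrank k (DhB k n) = Module.finrank k (DhB k m) := e'.finrank_eq
    rw [dh_finrank, dh_finrank] at h1
    omega
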